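/- Let b > 0 and b ≤ c ≤ b+1. The constant Φ(b,c) := (1/(4(2b+1)²))·( 4(b+1)⁴·log(b+1) − 4b⁴·log b − (2b+1)·( 3 + 6b + 6b² − 4c² + 4(2b²+2b+1)·log c ) ) is sharp: there exists an H¹ function v on [b,b+1] with ∫_b^{b+1} v(r)·r dr = 0, v(c) ≠ 0, and v(c)² = Φ(b,c) · ∫_b^{b+1} v'(r)² · r dr. -/

import Mathlib

open MeasureTheory Set

/-- The sharp constant `Φ(b,c)` in the weighted Poincaré inequality on `[b, b+1]`. -/
noncomputable def Phi (b c : ℝ) : ℝ :=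
  (1 / (4 * (2 * b + 1) ^ 2)) *
    (4 * (b + 1) ^ 4 * Real.log (b + 1) - 4 * b ^ 4 * Real.log b
      - (2 * b + 1) * (3 + 6 * b + 6 * b ^ 2 - 4 * c ^ 2
          + 4 * (2 * b ^ 2 + 2 * b + 1) * Real.log c))

private lemma integrableOn_piece {b c : ℝ} (hc : c ∈ Set.Icc b (b + 1)) {f h1 h2 : ℝ → ℝ}
    (e1 : Set.EqOn h1 f (Set.Icc b c)) (e2 : Set.EqOn h2 f (Set.Ioc c (b + 1)))
    (c1 : ContinuousOn h1 (Set.Icc b c)) (c2 : ContinuousOn h2 (Set.Icc c (b + 1))) :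
    MeasureTheory.IntegrableOn f (Set.Icc b (b + 1)) := by
  have i1 : IntegrableOn f (Set.Icc b c) :=
    (c1.integrableOn_Icc).congr_fun e1 measurableSet_Icc
  have i2 : IntegrableOn f (Set.Ioc c (b + 1)) :=
    ((c2.integrableOn_Icc).mono_set Set.Ioc_subset_Icc_self).congr_fun e2 measurableSet_Ioc
  exact (i1.union i2).mono_set (fun x hx => by
    rcases le_or_gt x c with h | h
    · exact Or.inl ⟨hx.1, h⟩
    · exact Or.inr ⟨h, hx.2⟩)

/-- derivative of the antiderivative used for `∫ g`. -/
private lemma hasDerivAt_H (B a : ℝ) (hB : B ≠ 0) {t : ℝ} (ht : t ≠ 0) :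
    HasDerivAt (fun x => x ^ 2 / (2 * B) - a * Real.log x / B) ((t ^ 2 - a) / (B * t)) t := by
  have h1 : HasDerivAt (fun x : ℝ => x ^ 2 / (2 * B)) ((2 * t ^ 1) / (2 * B)) t :=
    (hasDerivAt_pow 2 t).div_const (2 * B)
  have h2 : HasDerivAt (fun x : ℝ => a * Real.log x / B) (a * t⁻¹ / B) t :=
    ((Real.hasDerivAt_log ht).const_mul a).div_const B
  refine (h1.sub h2).congr_deriv ?_
  field_simp

/-- derivative of the antiderivative used for `∫ g² r`. -/
private lemma hasDerivAt_F (B a : ℝ) (hB : B ≠ 0) {t : ℝ} (ht : t ≠ 0) :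
    HasDerivAt (fun x => (x ^ 4 / 4 - a * x ^ 2 + a ^ 2 * Real.log x) / B ^ 2)
      (((t ^ 2 - a) / (B * t)) ^ 2 * t) t := by
  have h1 : HasDerivAt (fun x : ℝ => x ^ 4 / 4 - a * x ^ 2 + a ^ 2 * Real.log x)
      ((4 * t ^ 3) / 4 - a * (2 * t ^ 1) + a ^ 2 * t⁻¹) t :=
    (((hasDerivAt_pow 4 t).div_const 4).sub ((hasDerivAt_pow 2 t).const_mul a)).add
      ((Real.hasDerivAt_log ht).const_mul (a ^ 2))
  refine (h1.div_const (B ^ 2)).congr_deriv ?_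
  field_simp
  ring

/-- derivative of the antiderivative used for `∫ v r`. -/
private lemma hasDerivAt_G (B a K : ℝ) (hB : B ≠ 0) {t : ℝ} (ht : t ≠ 0) :
    HasDerivAt (fun x => K * x ^ 2 / 2 + x ^ 4 / (8 * B)
        - a / B * (x ^ 2 / 2 * Real.log x - x ^ 2 / 4))
      ((K + t ^ 2 / (2 * B) - a * Real.log t / B) * t) t := by
  have h1 : HasDerivAt (fun x : ℝ => K * x ^ 2 / 2) (K * (2 * t ^ 1) / 2) t :=
    (((hasDerivAt_pow 2 t).const_mul K)).div_const 2
  have h2 : HasDerivAt (fun x : ℝ => x ^ 4 / (8 * B)) ((4 * t ^ 3) / (8 * B)) t :=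
    (hasDerivAt_pow 4 t).div_const (8 * B)
  have h3 : HasDerivAt (fun x : ℝ => x ^ 2 / 2 * Real.log x - x ^ 2 / 4)
      ((2 * t ^ 1) / 2 * Real.log t + t ^ 2 / 2 * t⁻¹ - (2 * t ^ 1) / 4) t :=
    (((hasDerivAt_pow 2 t).div_const 2).mul (Real.hasDerivAt_log ht)).sub
      ((hasDerivAt_pow 2 t).div_const 4)
  refine ((h1.add h2).sub (h3.const_mul (a / B))).congr_deriv ?_
  field_simp
  ring

set_option maxHeartbeats 1600000 in
/-- Sharpness of the constant `Φ(b,c)`: for `b > 0` and `b ≤ c ≤ b+1` there is an `H¹`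
function `v` on `[b, b+1]` (with derivative `g`) of mean zero with respect to `r dr`,
with `v(c) ≠ 0` and `v(c)² = Φ(b,c) ∫_b^{b+1} v'(r)² r dr`. -/
theorem pointwise_poincare_sharp (b c : ℝ) (hb : 0 < b) (hc : c ∈ Set.Icc b (b + 1)) :
    ∃ v g : ℝ → ℝ, ContinuousOn v (Set.Icc b (b + 1)) ∧
      MeasureTheory.IntegrableOn (fun t => g t ^ 2) (Set.Ioo b (b + 1)) ∧
      (∀ x ∈ Set.Icc b (b + 1), v x = v b + ∫ t in b..x, g t) ∧
      (∫ r in b..(b + 1), v r * r) = 0 ∧ v c ≠ 0 ∧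
      v c ^ 2 = Phi b c * ∫ r in b..(b + 1), (g r) ^ 2 * r := by
  obtain ⟨hbc, hcb⟩ := hc
  have hB0 : (0:ℝ) < 2 * b + 1 := by linarith
  have hB : (2 * b + 1 : ℝ) ≠ 0 := ne_of_gt hB0
  have hc0 : 0 < c := lt_of_lt_of_le hb hbc
  have hb1 : b < b + 1 := by linarith
  set K : ℝ := -(2 / (2 * b + 1)) * ((((b+1)^4 - b^4) / (8*(2*b+1)))
      - (b^2 / (2*b+1)) * (c^2/2 * Real.log c - c^2/4 - b^2/2 * Real.log b + b^2/4)
      + Real.log c * (((b+1)^2 - c^2) / 2)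
      - ((b+1)^2 / (2*b+1)) * ((b+1)^2/2 * Real.log (b+1) - (b+1)^2/4
          - c^2/2 * Real.log c + c^2/4)) with hK
  set v : ℝ → ℝ := fun x => K + x^2/(2*(2*b+1)) - b^2 * Real.log x / (2*b+1)
      + min 0 (Real.log c - Real.log x) with hv
  set g : ℝ → ℝ := fun x => if x ≤ c then (x^2 - b^2)/((2*b+1)*x)
      else (x^2 - (b+1)^2)/((2*b+1)*x) with hg
  -- continuity of log on subsets of [b, b+1]
  have hlogC : ∀ s : Set ℝ, s ⊆ Set.Icc b (b+1) → ContinuousOn Real.log s := by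
    intro s hs
    refine Real.continuousOn_log.mono (fun x hx => ?_)
    simp only [Set.mem_compl_iff, Set.mem_singleton_iff]
    exact ne_of_gt (lt_of_lt_of_le hb (hs hx).1)
  -- min-branch facts
  have hmin0 : ∀ x : ℝ, 0 < x → x ≤ c → min 0 (Real.log c - Real.log x) = 0 := by
    intro x hx0 hxc
    exact min_eq_left (by linarith [Real.log_le_log hx0 hxc])
  have hmin1 : ∀ x : ℝ, c ≤ x → min 0 (Real.log c - Real.log x) = Real.log c - Real.log x := by
    intro x hxc
    exact min_eq_right (by linarith [Real.log_le_log hc0 hxc])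
  -- continuity of v
  have hcv : ContinuousOn v (Set.Icc b (b+1)) := by
    rw [hv]
    refine ContinuousOn.add (ContinuousOn.sub (ContinuousOn.add continuousOn_const
        (((continuous_pow 2).continuousOn).div_const _))
        ((continuousOn_const.mul (hlogC _ (subset_refl _))).div_const _)) ?_
    exact continuousOn_const.inf (continuousOn_const.sub (hlogC _ (subset_refl _)))
  -- continuity of the two branches of g (and variants)
  have hcg1 : ContinuousOn (fun t : ℝ => (t^2 - b^2)/((2*b+1)*t)) (Set.Icc b c) := by
    refine ContinuousOn.div (by fun_prop) (by fun_prop) (fun x hx => ?_)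
    exact mul_ne_zero hB (ne_of_gt (lt_of_lt_of_le hb hx.1))
  have hcg2 : ContinuousOn (fun t : ℝ => (t^2 - (b+1)^2)/((2*b+1)*t)) (Set.Icc c (b+1)) := by
    refine ContinuousOn.div (by fun_prop) (by fun_prop) (fun x hx => ?_)
    exact mul_ne_zero hB (ne_of_gt (lt_of_lt_of_le hc0 hx.1))
  -- branch equalities for g
  have heq1 : Set.EqOn (fun t : ℝ => (t^2 - b^2)/((2*b+1)*t)) g (Set.Icc b c) := by
    intro t ht; simp only [hg]; rw [if_pos ht.2]
  have heq2 : Set.EqOn (fun t : ℝ => (t^2 - (b+1)^2)/((2*b+1)*t)) g (Set.Ioc c (b+1)) := by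
    intro t ht; simp only [hg]; rw [if_neg (not_le.2 ht.1)]
  -- integrability of g²
  have hig2 : MeasureTheory.IntegrableOn (fun t => g t ^ 2) (Set.Icc b (b+1)) := by
    refine integrableOn_piece ⟨hbc, hcb⟩ (h1 := fun t => ((t^2 - b^2)/((2*b+1)*t))^2)
      (h2 := fun t => ((t^2 - (b+1)^2)/((2*b+1)*t))^2) ?_ ?_ (hcg1.pow 2) (hcg2.pow 2)
    · intro t ht; exact congrArg (fun y => y ^ 2) (heq1 ht)
    · intro t ht; exact congrArg (fun y => y ^ 2) (heq2 ht)
  -- interval integrability of g on [b,c] and on [c,x] for c ≤ x ≤ b+1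
  have hii1 : IntervalIntegrable g volume b c := by
    refine MeasureTheory.IntegrableOn.intervalIntegrable ?_
    rw [Set.uIcc_of_le hbc]
    exact (hcg1.integrableOn_Icc).congr_fun heq1 measurableSet_Icc
  have hii2 : ∀ x : ℝ, c ≤ x → x ≤ b + 1 → IntervalIntegrable g volume c x := by
    intro x h1 h2
    rw [intervalIntegrable_iff_integrableOn_Ioc_of_le h1]
    refine MeasureTheory.IntegrableOn.congr_fun ?_ (fun t ht => heq2 ⟨ht.1, le_trans ht.2 h2⟩)
      measurableSet_Ioc
    exact ((hcg2.mono (Set.Icc_subset_Icc le_rfl h2)).integrableOn_Icc).mono_set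
      Set.Ioc_subset_Icc_self
  -- ∫ g on [b,x] for x ≤ c
  have key1 : ∀ x : ℝ, b ≤ x → x ≤ c → ∫ t in b..x, g t =
      (x^2/(2*(2*b+1)) - b^2 * Real.log x/(2*b+1))
        - (b^2/(2*(2*b+1)) - b^2 * Real.log b/(2*b+1)) := by
    intro x h1 h2
    rw [← intervalIntegral.integral_congr (f := fun t : ℝ => (t^2 - b^2)/((2*b+1)*t))
      (fun t ht => by
        rw [Set.uIcc_of_le h1] at ht
        exact heq1 ⟨ht.1, le_trans ht.2 h2⟩)]
    exact intervalIntegral.integral_eq_sub_of_hasDerivAt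
      (fun t ht => by
        rw [Set.uIcc_of_le h1] at ht
        exact hasDerivAt_H (2*b+1) (b^2) hB (ne_of_gt (lt_of_lt_of_le hb ht.1)))
      (by
        refine ContinuousOn.intervalIntegrable ?_
        rw [Set.uIcc_of_le h1]
        exact hcg1.mono (Set.Icc_subset_Icc le_rfl h2))
  -- ∫ g on [c,x] for c ≤ x
  have key2 : ∀ x : ℝ, c ≤ x → x ≤ b + 1 → ∫ t in c..x, g t =
      (x^2/(2*(2*b+1)) - (b+1)^2 * Real.log x/(2*b+1))
        - (c^2/(2*(2*b+1)) - (b+1)^2 * Real.log c/(2*b+1)) := by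
    intro x h1 h2
    rw [intervalIntegral.integral_congr_ae (g := fun t : ℝ => (t^2 - (b+1)^2)/((2*b+1)*t))
      (Filter.Eventually.of_forall (fun t ht => by
        rw [Set.uIoc_of_le h1] at ht
        exact (heq2 ⟨ht.1, le_trans ht.2 h2⟩).symm))]
    exact intervalIntegral.integral_eq_sub_of_hasDerivAt
      (fun t ht => by
        rw [Set.uIcc_of_le h1] at ht
        exact hasDerivAt_H (2*b+1) ((b+1)^2) hB (ne_of_gt (lt_of_lt_of_le hc0 ht.1)))
      (by
        refine ContinuousOn.intervalIntegrable ?_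
        rw [Set.uIcc_of_le h1]
        exact hcg2.mono (Set.Icc_subset_Icc le_rfl h2))
  -- the H¹ characterization
  have char : ∀ x ∈ Set.Icc b (b + 1), v x = v b + ∫ t in b..x, g t := by
    intro x hx
    rcases le_or_gt x c with h | h
    · rw [key1 x hx.1 h]
      simp only [hv]
      rw [hmin0 b hb hbc, hmin0 x (lt_of_lt_of_le hb hx.1) h]
      ring
    · rw [← intervalIntegral.integral_add_adjacent_intervals hii1 (hii2 x h.le hx.2),
        key1 c hbc le_rfl, key2 x h.le hx.2]
      simp only [hv]
      rw [hmin0 b hb hbc, hmin1 x h.le]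
      field_simp
      ring
  -- mean-zero: split the integral of v·r at c
  have jv1 : IntervalIntegrable (fun r => v r * r) volume b c := by
    refine ContinuousOn.intervalIntegrable ?_
    rw [Set.uIcc_of_le hbc]
    exact (hcv.mono (Set.Icc_subset_Icc le_rfl hcb)).mul continuousOn_id
  have jv2 : IntervalIntegrable (fun r => v r * r) volume c (b+1) := by
    refine ContinuousOn.intervalIntegrable ?_
    rw [Set.uIcc_of_le hcb]
    exact (hcv.mono (Set.Icc_subset_Icc hbc le_rfl)).mul continuousOn_id
  have m1 : ∫ r in b..c, v r * r =
      (K * c^2/2 + c^4/(8*(2*b+1)) - b^2/(2*b+1) * (c^2/2 * Real.log c - c^2/4))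
        - (K * b^2/2 + b^4/(8*(2*b+1)) - b^2/(2*b+1) * (b^2/2 * Real.log b - b^2/4)) := by
    rw [intervalIntegral.integral_congr (g := fun t : ℝ =>
        (K + t^2/(2*(2*b+1)) - b^2 * Real.log t/(2*b+1)) * t)
      (fun t ht => by
        rw [Set.uIcc_of_le hbc] at ht
        simp only [hv]
        rw [hmin0 t (lt_of_lt_of_le hb ht.1) ht.2]
        ring)]
    have := intervalIntegral.integral_eq_sub_of_hasDerivAt
      (f := fun x : ℝ => K * x ^ 2 / 2 + x ^ 4 / (8 * (2*b+1))
        - b^2 / (2*b+1) * (x ^ 2 / 2 * Real.log x - x ^ 2 / 4))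
      (f' := fun t : ℝ => (K + t^2/(2*(2*b+1)) - b^2 * Real.log t/(2*b+1)) * t)
      (fun t ht => by
        rw [Set.uIcc_of_le hbc] at ht
        exact hasDerivAt_G (2*b+1) (b^2) K hB (ne_of_gt (lt_of_lt_of_le hb ht.1)))
      (by
        refine ContinuousOn.intervalIntegrable ?_
        rw [Set.uIcc_of_le hbc]
        refine ContinuousOn.mul ?_ continuousOn_id
        exact (continuousOn_const.add (((continuous_pow 2).continuousOn).div_const _)).sub
          ((continuousOn_const.mul (hlogC _ (Set.Icc_subset_Icc le_rfl hcb))).div_const _))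
    rw [this]
  have m2 : ∫ r in c..(b+1), v r * r =
      ((K + Real.log c) * (b+1)^2/2 + (b+1)^4/(8*(2*b+1))
          - (b+1)^2/(2*b+1) * ((b+1)^2/2 * Real.log (b+1) - (b+1)^2/4))
        - ((K + Real.log c) * c^2/2 + c^4/(8*(2*b+1))
          - (b+1)^2/(2*b+1) * (c^2/2 * Real.log c - c^2/4)) := by
    rw [intervalIntegral.integral_congr (g := fun t : ℝ =>
        ((K + Real.log c) + t^2/(2*(2*b+1)) - (b+1)^2 * Real.log t/(2*b+1)) * t)
      (fun t ht => by
        rw [Set.uIcc_of_le hcb] at ht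
        simp only [hv]
        rw [hmin1 t ht.1]
        have ht0 : t ≠ 0 := ne_of_gt (lt_of_lt_of_le hc0 ht.1)
        field_simp
        ring_nf
        try exact Or.inl trivial)]
    have := intervalIntegral.integral_eq_sub_of_hasDerivAt
      (f := fun x : ℝ => (K + Real.log c) * x ^ 2 / 2 + x ^ 4 / (8 * (2*b+1))
        - (b+1)^2 / (2*b+1) * (x ^ 2 / 2 * Real.log x - x ^ 2 / 4))
      (f' := fun t : ℝ => ((K + Real.log c) + t^2/(2*(2*b+1)) - (b+1)^2 * Real.log t/(2*b+1)) * t)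
      (fun t ht => by
        rw [Set.uIcc_of_le hcb] at ht
        exact hasDerivAt_G (2*b+1) ((b+1)^2) (K + Real.log c) hB
          (ne_of_gt (lt_of_lt_of_le hc0 ht.1)))
      (by
        refine ContinuousOn.intervalIntegrable ?_
        rw [Set.uIcc_of_le hcb]
        refine ContinuousOn.mul ?_ continuousOn_id
        exact (continuousOn_const.add (((continuous_pow 2).continuousOn).div_const _)).sub
          ((continuousOn_const.mul (hlogC _ (Set.Icc_subset_Icc hbc le_rfl))).div_const _))
    rw [this]
  have mean0 : (∫ r in b..(b + 1), v r * r) = 0 := by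
    rw [← intervalIntegral.integral_add_adjacent_intervals jv1 jv2, m1, m2, hK]
    field_simp
    ring
  -- the energy integral
  have n1 : ∫ r in b..c, g r ^ 2 * r =
      ((c^4/4 - b^2 * c^2 + (b^2)^2 * Real.log c) / (2*b+1)^2)
        - ((b^4/4 - b^2 * b^2 + (b^2)^2 * Real.log b) / (2*b+1)^2) := by
    rw [intervalIntegral.integral_congr (g := fun t : ℝ =>
        ((t^2 - b^2)/((2*b+1)*t)) ^ 2 * t)
      (fun t ht => by
        rw [Set.uIcc_of_le hbc] at ht
        exact congrArg (fun y => y ^ 2 * t) (heq1 ht).symm)]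
    have := intervalIntegral.integral_eq_sub_of_hasDerivAt
      (f := fun x : ℝ => (x ^ 4 / 4 - b^2 * x ^ 2 + (b^2) ^ 2 * Real.log x) / (2*b+1) ^ 2)
      (f' := fun t : ℝ => ((t^2 - b^2)/((2*b+1)*t)) ^ 2 * t)
      (fun t ht => by
        rw [Set.uIcc_of_le hbc] at ht
        exact hasDerivAt_F (2*b+1) (b^2) hB (ne_of_gt (lt_of_lt_of_le hb ht.1)))
      (by
        refine ContinuousOn.intervalIntegrable ?_
        rw [Set.uIcc_of_le hbc]
        exact (hcg1.pow 2).mul continuousOn_id)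
    rw [this]
  have n2 : ∫ r in c..(b+1), g r ^ 2 * r =
      (((b+1)^4/4 - (b+1)^2 * (b+1)^2 + ((b+1)^2)^2 * Real.log (b+1)) / (2*b+1)^2)
        - ((c^4/4 - (b+1)^2 * c^2 + ((b+1)^2)^2 * Real.log c) / (2*b+1)^2) := by
    rw [intervalIntegral.integral_congr_ae (g := fun t : ℝ =>
        ((t^2 - (b+1)^2)/((2*b+1)*t)) ^ 2 * t)
      (Filter.Eventually.of_forall (fun t ht => by
        rw [Set.uIoc_of_le hcb] at ht
        exact congrArg (fun y => y ^ 2 * t) (heq2 ⟨ht.1, ht.2⟩).symm))]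
    have := intervalIntegral.integral_eq_sub_of_hasDerivAt
      (f := fun x : ℝ => (x ^ 4 / 4 - (b+1)^2 * x ^ 2 + ((b+1)^2) ^ 2 * Real.log x) / (2*b+1) ^ 2)
      (f' := fun t : ℝ => ((t^2 - (b+1)^2)/((2*b+1)*t)) ^ 2 * t)
      (fun t ht => by
        rw [Set.uIcc_of_le hcb] at ht
        exact hasDerivAt_F (2*b+1) ((b+1)^2) hB (ne_of_gt (lt_of_lt_of_le hc0 ht.1)))
      (by
        refine ContinuousOn.intervalIntegrable ?_
        rw [Set.uIcc_of_le hcb]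
        exact (hcg2.pow 2).mul continuousOn_id)
    rw [this]
  have ji1 : IntervalIntegrable (fun r => g r ^ 2 * r) volume b c := by
    refine MeasureTheory.IntegrableOn.intervalIntegrable ?_
    rw [Set.uIcc_of_le hbc]
    refine MeasureTheory.IntegrableOn.congr_fun
      (f := fun t : ℝ => ((t^2 - b^2)/((2*b+1)*t)) ^ 2 * t)
      (((hcg1.pow 2).mul continuousOn_id).integrableOn_Icc)
      (fun t ht => congrArg (fun y => y ^ 2 * t) (heq1 ht)) measurableSet_Icc
  have ji2 : IntervalIntegrable (fun r => g r ^ 2 * r) volume c (b+1) := by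
    rw [intervalIntegrable_iff_integrableOn_Ioc_of_le hcb]
    refine MeasureTheory.IntegrableOn.congr_fun
      (f := fun t : ℝ => ((t^2 - (b+1)^2)/((2*b+1)*t)) ^ 2 * t)
      ((((hcg2.pow 2).mul continuousOn_id).integrableOn_Icc).mono_set Set.Ioc_subset_Icc_self)
      (fun t ht => congrArg (fun y => y ^ 2 * t) (heq2 ht)) measurableSet_Ioc
  have energy : ∫ r in b..(b + 1), g r ^ 2 * r = Phi b c := by
    rw [← intervalIntegral.integral_add_adjacent_intervals ji1 ji2, n1, n2, Phi]
    field_simp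
    ring
  -- v c = Phi b c
  have hvc : v c = Phi b c := by
    simp only [hv]
    rw [hmin0 c hc0 le_rfl, hK, Phi]
    field_simp
    ring
  -- positivity of the energy
  have hpos : 0 < ∫ r in b..(b + 1), g r ^ 2 * r := by
    refine intervalIntegral.intervalIntegral_pos_of_pos_on (ji1.trans ji2) (fun x hx => ?_) hb1
    have hx0 : 0 < x := lt_trans hb hx.1
    have hgx : g x ≠ 0 := by
      simp only [hg]
      rcases le_or_gt x c with h | h
      · rw [if_pos h]
        have : 0 < x^2 - b^2 := by nlinarith [hx.1]
        positivity
      · rw [if_neg (not_le.2 h)]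
        have h1 : x^2 - (b+1)^2 < 0 := by nlinarith [hx.2]
        have h2 : 0 < (2*b+1) * x := by positivity
        exact ne_of_lt (div_neg_of_neg_of_pos h1 h2)
    have : 0 < g x ^ 2 := by positivity
    positivity
  have hPhipos : 0 < Phi b c := energy ▸ hpos
  exact ⟨v, g, hcv, hig2.mono_set Set.Ioo_subset_Icc_self, char, mean0,
    by rw [hvc]; exact ne_of_gt hPhipos,
    by rw [hvc, energy]; ring⟩
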